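/- Let f = (f_1,…,f_n) be polynomials in R[x] with each deg f_i ≥ 1, let δ_f = Σ_{i=1}^n (deg f_i − 1), and let F ∈ R[x] with deg F ≤ d. Let ∇f_i(x,y) be monotonous difference derivatives of the f_i and let ∇F(x,y) be a difference derivative of F all of whose components have total degree ≤ d − 1. Then the polynomial R(x,y) = det‖∇f(x,y) ∇F(x,y); f(x) F(x)‖ has total degree ≤ δ_f + d. -/

import Mathlib

open MvPolynomial Finset

noncomputable section

variable {R : Type*} [CommRing R] {n : ℕ}

/-- Total degree of a multivariate polynomial, valued in `WithBot ℤ`,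
with the convention `deg 0 = ⊥` (i.e. `-∞`). -/
def mdeg {σ S : Type*} [CommSemiring S] (F : MvPolynomial σ S) : WithBot ℤ :=
  F.support.sup fun m => ((m.sum fun _ e => e : ℕ) : ℤ)

/-- The embedding `R[x] → R[x,y]`, `x_i ↦ x_i` (the x-variables are `Sum.inl`,
the y-variables are `Sum.inr`). -/
def toX : MvPolynomial (Fin n) R →ₐ[R] MvPolynomial (Fin n ⊕ Fin n) R :=
  rename Sum.inl

/-- The embedding `R[x] → R[x,y]`, `x_i ↦ y_i`. -/
def toY : MvPolynomial (Fin n) R →ₐ[R] MvPolynomial (Fin n ⊕ Fin n) R :=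
  rename Sum.inr

/-- `D = (∇¹F, …, ∇ⁿF)` is a difference derivative of `F`:
`∑ k, (x_k - y_k) * ∇ᵏF(x,y) = F(x) - F(y)`. -/
def IsDiffDeriv (F : MvPolynomial (Fin n) R)
    (D : Fin n → MvPolynomial (Fin n ⊕ Fin n) R) : Prop :=
  ∑ k : Fin n, (X (Sum.inl k) - X (Sum.inr k)) * D k = toX F - toY F

/-- A difference derivative of `F` is monotonous if each component has total degree
`≤ deg F - 1` (equivalently `deg (∇ᵏF) + 1 ≤ deg F` in `WithBot ℤ`). -/
def IsMonotonous (F : MvPolynomial (Fin n) R)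
    (D : Fin n → MvPolynomial (Fin n ⊕ Fin n) R) : Prop :=
  ∀ k, mdeg (D k) + 1 ≤ mdeg F

/-- `δ_f = ∑ᵢ (deg fᵢ - 1)`. -/
def deltaF (f : Fin n → MvPolynomial (Fin n) R) : ℤ :=
  ∑ i, (((f i).totalDegree : ℤ) - 1)

/-- `(f)^{≤ d}_x`: sums `∑ fᵢ gᵢ` with `deg fᵢ + deg gᵢ ≤ d` for every `i`. -/
def boundedSpan (f : Fin n → MvPolynomial (Fin n) R) (d : WithBot ℤ) :
    Set (MvPolynomial (Fin n) R) :=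
  {F | ∃ g : Fin n → MvPolynomial (Fin n) R,
    F = ∑ i, f i * g i ∧ ∀ i, mdeg (f i) + mdeg (g i) ≤ d}

/-- A linear functional `L` annuls a set `S` if it vanishes on it. -/
def Annuls (L : MvPolynomial (Fin n) R →ₗ[R] R) (S : Set (MvPolynomial (Fin n) R)) : Prop :=
  ∀ F ∈ S, L F = 0

/-- `L(y_*).P` : apply the functional `L` to the `y`-part of `P ∈ R[x,y]`,
i.e. if `P = ∑_α A_α(x) y^α` then `L(y_*).P = ∑_α L(y^α) • A_α(x)`. -/
def applyY (L : MvPolynomial (Fin n) R →ₗ[R] R) (P : MvPolynomial (Fin n ⊕ Fin n) R) :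
    MvPolynomial (Fin n) R :=
  ∑ m ∈ P.support,
    C (L (monomial (Finsupp.sumFinsuppAddEquivProdFinsupp m).2 (1 : R)) * P.coeff m) *
      monomial (Finsupp.sumFinsuppAddEquivProdFinsupp m).1 (1 : R)

/-- `det‖∇f(x,y) ∇F(x,y); f(x) F(x)‖` : the `(n+1) × (n+1)` determinant whose entry `(k,i)`
is `∇ᵏfᵢ(x,y)` for `k, i ≤ n`, entry `(k, n+1)` is `∇ᵏF(x,y)`, entry `(n+1, i)` is `fᵢ(x)`,
and entry `(n+1, n+1)` is `F(x)`.  Here `Df i` is the tuple `(∇¹fᵢ, …, ∇ⁿfᵢ)`. -/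
def ddetX (f : Fin n → MvPolynomial (Fin n) R)
    (Df : Fin n → Fin n → MvPolynomial (Fin n ⊕ Fin n) R)
    (F : MvPolynomial (Fin n) R) (DF : Fin n → MvPolynomial (Fin n ⊕ Fin n) R) :
    MvPolynomial (Fin n ⊕ Fin n) R :=
  Matrix.det (Matrix.of fun k i : Fin (n + 1) =>
    if hk : (k : ℕ) < n then
      if hi : (i : ℕ) < n then Df ⟨i, hi⟩ ⟨k, hk⟩ else DF ⟨k, hk⟩
    else
      if hi : (i : ℕ) < n then toX (f ⟨i, hi⟩) else toX F)

/-- `det‖∇f(x,y) ∇F(x,y); f(y) F(y)‖` : as `ddetX` but with last row `(f₁(y),…,fₙ(y),F(y))`. -/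
def ddetY (f : Fin n → MvPolynomial (Fin n) R)
    (Df : Fin n → Fin n → MvPolynomial (Fin n ⊕ Fin n) R)
    (F : MvPolynomial (Fin n) R) (DF : Fin n → MvPolynomial (Fin n ⊕ Fin n) R) :
    MvPolynomial (Fin n ⊕ Fin n) R :=
  Matrix.det (Matrix.of fun k i : Fin (n + 1) =>
    if hk : (k : ℕ) < n then
      if hi : (i : ℕ) < n then Df ⟨i, hi⟩ ⟨k, hk⟩ else DF ⟨k, hk⟩
    else
      if hi : (i : ℕ) < n then toY (f ⟨i, hi⟩) else toY F)

lemma le_mdeg {σ S : Type*} [CommSemiring S] {p : MvPolynomial σ S} {m : σ →₀ ℕ}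
    (hm : m ∈ p.support) : (((m.sum fun _ e => e : ℕ) : ℤ) : WithBot ℤ) ≤ mdeg p :=
  Finset.le_sup (f := fun m => (((m.sum fun _ e => e : ℕ) : ℤ) : WithBot ℤ)) hm

lemma mdeg_le {σ S : Type*} [CommSemiring S] {p : MvPolynomial σ S} {b : WithBot ℤ}
    (h : ∀ m ∈ p.support, (((m.sum fun _ e => e : ℕ) : ℤ) : WithBot ℤ) ≤ b) : mdeg p ≤ b :=
  Finset.sup_le h

section aux
variable {σ τ S : Type*} [CommSemiring S]

lemma mdeg_C_le (a : S) : mdeg (C a : MvPolynomial σ S) ≤ 0 := by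
  classical
  refine mdeg_le fun m hm => ?_
  have hm' := MvPolynomial.mem_support_iff.mp hm
  rw [MvPolynomial.coeff_C] at hm'
  have : (0 : σ →₀ ℕ) = m := by by_contra h; simp [h] at hm'
  subst this; simp

lemma mdeg_mul_le (p q : MvPolynomial σ S) : mdeg (p * q) ≤ mdeg p + mdeg q := by
  classical
  refine mdeg_le fun m hm => ?_
  have := MvPolynomial.support_mul p q hm
  rw [Finset.mem_add] at this
  obtain ⟨a, ha, b, hb, rfl⟩ := this
  have h1 : ((a.sum fun _ e => e : ℕ) : WithBot ℤ) ≤ mdeg p := le_mdeg ha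
  have h2 : ((b.sum fun _ e => e : ℕ) : WithBot ℤ) ≤ mdeg q := le_mdeg hb
  have : ((a + b).sum fun _ e => e : ℕ) = (a.sum fun _ e => e) + (b.sum fun _ e => e) :=
    Finsupp.sum_add_index' (fun _ => rfl) (fun _ _ _ => rfl)
  rw [this, Nat.cast_add, WithBot.coe_add]
  exact add_le_add h1 h2

lemma mdeg_add_le (p q : MvPolynomial σ S) : mdeg (p + q) ≤ max (mdeg p) (mdeg q) := by
  classical
  refine mdeg_le fun m hm => ?_
  have := MvPolynomial.support_add (p := p) (q := q) hm
  rw [Finset.mem_union] at this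
  rcases this with h | h
  · exact le_max_of_le_left (le_mdeg h)
  · exact le_max_of_le_right (le_mdeg h)

lemma mdeg_sum_le {ι : Type*} (s : Finset ι) (p : ι → MvPolynomial σ S) (b : WithBot ℤ)
    (h : ∀ i ∈ s, mdeg (p i) ≤ b) : mdeg (∑ i ∈ s, p i) ≤ b := by
  classical
  induction s using Finset.cons_induction with
  | empty => simp [mdeg]
  | cons a s ha ih =>
    rw [Finset.sum_cons]
    refine le_trans (mdeg_add_le _ _) (max_le (h a (by simp)) (ih fun i hi => h i (by simp [hi])))

lemma mdeg_prod_le {ι : Type*} (s : Finset ι) (p : ι → MvPolynomial σ S) :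
    mdeg (∏ i ∈ s, p i) ≤ ∑ i ∈ s, mdeg (p i) := by
  classical
  induction s using Finset.cons_induction with
  | empty =>
    simpa using (by rw [← MvPolynomial.C_1]; exact mdeg_C_le (1 : S) :
      mdeg (1 : MvPolynomial σ S) ≤ 0)
  | cons a s ha ih =>
    rw [Finset.prod_cons, Finset.sum_cons]
    exact le_trans (mdeg_mul_le _ _) (add_le_add le_rfl ih)

lemma mdeg_rename_le (g : σ → τ) (p : MvPolynomial σ S) : mdeg (rename g p) ≤ mdeg p := by
  classical
  refine mdeg_le fun m hm => ?_
  obtain ⟨a, ha, hcoeff⟩ :=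
    MvPolynomial.coeff_rename_ne_zero g p m (MvPolynomial.mem_support_iff.mp hm)
  have : m.sum (fun _ e => e) = a.sum fun _ e => e := by
    rw [← ha]; exact Finsupp.sum_mapDomain_index (fun _ => rfl) (fun _ _ _ => rfl)
  rw [this]
  exact le_mdeg (MvPolynomial.mem_support_iff.mpr hcoeff)

lemma mdeg_eq_totalDegree {p : MvPolynomial σ S} (hp : p ≠ 0) :
    mdeg p = ((p.totalDegree : ℤ) : WithBot ℤ) := by
  refine le_antisymm (mdeg_le fun m hm => ?_) ?_
  · exact_mod_cast MvPolynomial.le_totalDegree hm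
  · obtain ⟨m, hm, he⟩ := Finset.exists_mem_eq_sup p.support
      (MvPolynomial.support_nonempty.mpr hp) (fun m => m.sum fun _ e => e)
    rw [MvPolynomial.totalDegree, he]
    exact le_mdeg hm

lemma wb_sub_one {a : WithBot ℤ} {b : ℤ} (h : a + 1 ≤ (b : WithBot ℤ)) :
    a ≤ ((b - 1 : ℤ) : WithBot ℤ) := by
  induction a using WithBot.recBotCoe with
  | bot => exact bot_le
  | coe x =>
    have : ((x + 1 : ℤ) : WithBot ℤ) ≤ (b : WithBot ℤ) := by push_cast; exact_mod_cast h
    have := WithBot.coe_le_coe.mp this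
    exact_mod_cast WithBot.coe_le_coe.mpr (by omega : x ≤ b - 1)

end aux

/-- the determinant `R(x,y) = det‖∇f ∇F; f(x) F(x)‖` has degree
`≤ δ_f + d`. -/
theorem ddetX_mdeg_le {R : Type*} [CommRing R] {n : ℕ}
    (f : Fin n → MvPolynomial (Fin n) R) (hf : ∀ i, (1 : WithBot ℤ) ≤ mdeg (f i))
    (Df : Fin n → Fin n → MvPolynomial (Fin n ⊕ Fin n) R)
    (hDf : ∀ i, IsDiffDeriv (f i) (Df i) ∧ IsMonotonous (f i) (Df i))
    (d : ℤ) (F : MvPolynomial (Fin n) R) (hF : mdeg F ≤ (d : WithBot ℤ))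
    (DF : Fin n → MvPolynomial (Fin n ⊕ Fin n) R)
    (hDF : IsDiffDeriv F DF) (hDFdeg : ∀ k, mdeg (DF k) ≤ ((d - 1 : ℤ) : WithBot ℤ)) :
    mdeg (ddetX f Df F DF) ≤ ((deltaF f + d : ℤ) : WithBot ℤ) := by
  classical
  have hfne : ∀ i, f i ≠ 0 := by
    intro i h
    have h1 := hf i
    rw [h] at h1
    simp [mdeg] at h1
  have hmf : ∀ i, mdeg (f i) = (((f i).totalDegree : ℤ) : WithBot ℤ) :=
    fun i => mdeg_eq_totalDegree (hfne i)
  set c : Fin (n + 1) → ℤ := fun i =>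
    if h : (i : ℕ) < n then ((f ⟨i, h⟩).totalDegree : ℤ) - 1 else d - 1 with hc
  have hsumc : ∑ i : Fin (n + 1), c i = deltaF f + (d - 1) := by
    rw [Fin.sum_univ_castSucc]
    have h1 : ∀ i : Fin n, c i.castSucc = ((f i).totalDegree : ℤ) - 1 := by
      intro i
      have hi : ((i.castSucc : Fin (n + 1)) : ℕ) < n := by simp [i.isLt]
      rw [hc]
      simp only [dif_pos hi]
      congr 2
    have h2 : c (Fin.last n) = d - 1 := by
      rw [hc]; simp
    rw [h2, Finset.sum_congr rfl fun i _ => h1 i]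
    rfl
  -- entry bounds
  have hentry : ∀ k i : Fin (n + 1),
      mdeg ((Matrix.of fun k i : Fin (n + 1) =>
        if hk : (k : ℕ) < n then
          if hi : (i : ℕ) < n then Df ⟨i, hi⟩ ⟨k, hk⟩ else DF ⟨k, hk⟩
        else
          if hi : (i : ℕ) < n then toX (f ⟨i, hi⟩) else toX F) k i)
        ≤ (c i : WithBot ℤ) + (if (k : ℕ) < n then 0 else 1) := by
    intro k i
    rcases Nat.lt_or_ge (k : ℕ) n with hk | hk
    · rcases Nat.lt_or_ge (i : ℕ) n with hi | hi
      · simp only [Matrix.of_apply, dif_pos hk, dif_pos hi, if_pos hk, add_zero, hc]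
        have h1 := (hDf ⟨i, hi⟩).2 ⟨k, hk⟩
        rw [hmf] at h1
        exact wb_sub_one h1
      · have hi' : ¬ ((i : ℕ) < n) := not_lt.mpr hi
        simp only [Matrix.of_apply, dif_pos hk, dif_neg hi', if_pos hk, add_zero, hc]
        exact hDFdeg ⟨k, hk⟩
    · have hk' : ¬ ((k : ℕ) < n) := not_lt.mpr hk
      rcases Nat.lt_or_ge (i : ℕ) n with hi | hi
      · simp only [Matrix.of_apply, dif_neg hk', dif_pos hi, if_neg hk', hc]
        refine le_trans (mdeg_rename_le _ _) ?_
        rw [hmf]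
        rw [show ((((f ⟨i, hi⟩).totalDegree : ℤ) - 1 : ℤ) : WithBot ℤ) + 1
            = (((f ⟨i, hi⟩).totalDegree : ℤ) : WithBot ℤ) by
          rw [← WithBot.coe_one, ← WithBot.coe_add]; congr 1; ring]
      · simp only [Matrix.of_apply, dif_neg hk', dif_neg (not_lt.mpr hi), if_neg hk', hc]
        refine le_trans (mdeg_rename_le _ _) (le_trans hF ?_)
        rw [show (((d : ℤ) - 1 : ℤ) : WithBot ℤ) + 1 = ((d : ℤ) : WithBot ℤ) by
          rw [← WithBot.coe_one, ← WithBot.coe_add]; congr 1; ring]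
  unfold ddetX
  rw [Matrix.det_apply']
  refine mdeg_sum_le _ _ _ fun σ _ => ?_
  refine le_trans (mdeg_mul_le _ _) ?_
  have hsign : mdeg (((Equiv.Perm.sign σ : ℤ) : MvPolynomial (Fin n ⊕ Fin n) R)) ≤ 0 := by
    rw [show (((Equiv.Perm.sign σ : ℤ) : MvPolynomial (Fin n ⊕ Fin n) R))
        = C (((Equiv.Perm.sign σ : ℤ) : R)) from
        (map_intCast (MvPolynomial.C : R →+* MvPolynomial (Fin n ⊕ Fin n) R)
          ((Equiv.Perm.sign σ : ℤ))).symm]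
    exact mdeg_C_le _
  refine le_trans (add_le_add hsign (mdeg_prod_le _ _)) ?_
  rw [zero_add]
  refine le_trans (Finset.sum_le_sum fun i _ => hentry (σ i) i) ?_
  rw [Finset.sum_add_distrib]
  have hind : ∑ i : Fin (n + 1), (if ((σ i : Fin (n + 1)) : ℕ) < n then (0 : WithBot ℤ) else 1)
      = 1 := by
    have key : ∀ i : Fin (n + 1),
        (if ((σ i : Fin (n + 1)) : ℕ) < n then (0 : WithBot ℤ) else 1)
          = if i = σ⁻¹ (Fin.last n) then 1 else 0 := by
      intro i
      by_cases h : i = σ⁻¹ (Fin.last n)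
      · subst h
        simp [Fin.last]
      · have hne : σ i ≠ Fin.last n := fun he => h (by rw [← he]; simp)
        have hlt : ((σ i : Fin (n + 1)) : ℕ) < n := by
          have h2 := (σ i).isLt
          rcases Nat.lt_or_ge ((σ i : Fin (n + 1)) : ℕ) n with h' | h'
          · exact h'
          · exact absurd (Fin.ext (by omega : ((σ i : Fin (n + 1)) : ℕ) = n)) hne
        simpa [hlt] using h
    rw [Finset.sum_congr rfl fun i _ => key i, Finset.sum_ite_eq']
    simp
  rw [hind, ← WithBot.coe_sum, hsumc, ← WithBot.coe_one, ← WithBot.coe_add]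
  exact WithBot.coe_le_coe.mpr (by omega)


end
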